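/- For every integer h > 1, the language L_h = (a b^h)^+ over the alphabet {a, b} is not h-strictly locally testable: for no choice of sets I, T ⊆ {a,b}^{h−1} and F ⊆ {a,b}^h do these sets define L_h, since the words a b^h ∈ L_h and a b^{h+1} ∉ L_h have the same prefix of length h−1, the same suffix of length h−1, and the same set of factors of length h. -/

import Mathlib

/-- `L` is `k`-strictly locally testable, as defined by the sets `I` (allowed
prefixes of length `k-1`), `T` (allowed suffixes of length `k-1`) and `F`
(allowed factors of length `k`): membership of words of length `< k` is
unconstrained. -/
def IsSLTWith {B : Type} (k : ℕ) (I T F : Set (List B)) (L : Set (List B)) : Prop :=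
  (∀ w ∈ I, w.length = k - 1) ∧ (∀ w ∈ T, w.length = k - 1) ∧ (∀ w ∈ F, w.length = k) ∧
  ∀ x : List B, k ≤ x.length →
    (x ∈ L ↔ x.take (k - 1) ∈ I ∧ x.drop (x.length - (k - 1)) ∈ T ∧
      ∀ y : List B, y.length = k → y <:+: x → y ∈ F)

/-- `L` is `k`-strictly locally testable. -/
def IsSLT {B : Type} (k : ℕ) (L : Set (List B)) : Prop :=
  ∃ I T F, IsSLTWith k I T F L

/-- `L ⊆ A⁺` is `(m,k)`-homomorphic: it is the letterwise homomorphic image of a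
`k`-slt language `L' ⊆ B⁺` over an alphabet `B` of cardinality `m`. -/
def IsHomomorphic {A : Type} (m k : ℕ) (L : Set (List A)) : Prop :=
  ∃ (B : Type) (instB : Fintype B) (L' : Set (List B)) (π : B → A),
    @Fintype.card B instB = m ∧ IsSLT k L' ∧ [] ∉ L' ∧ L = (List.map π) '' L'

/-- The two-letter alphabet `{a, b}`. -/
inductive Letter : Type
  | a : Letter
  | b : Letter
deriving DecidableEq

instance : Fintype Letter :=
  ⟨{Letter.a, Letter.b}, fun x => by cases x <;> simp⟩

/-- The language `L_h = (a b^h)⁺`. -/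
def Lh (h : ℕ) : Set (List Letter) :=
  {w | ∃ j : ℕ, 1 ≤ j ∧ w = (List.replicate j (Letter.a :: List.replicate h Letter.b)).flatten}

section Aux

open Letter

lemma infix_classify (h n : ℕ) (hh : 1 ≤ h) (hn : h ≤ n)
    (w : List Letter) (hw : w.length = h)
    (hi : w <:+: Letter.a :: List.replicate n Letter.b) :
    w = Letter.a :: List.replicate (h - 1) Letter.b ∨ w = List.replicate h Letter.b := by
  obtain ⟨s, t, hst⟩ := hi
  match s with
  | [] =>
    left
    simp only [List.nil_append] at hst
    obtain ⟨m, rfl⟩ : ∃ m, h = m + 1 := ⟨h - 1, by omega⟩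
    have h1 : List.take (m + 1) (w ++ t) = w := List.take_left' hw
    rw [hst] at h1
    rw [List.take_succ_cons, List.take_replicate] at h1
    rw [← h1]
    congr 2
    omega
  | c :: s' =>
    right
    rw [List.cons_append, List.cons_append] at hst
    injection hst with h1 h2
    have hmem : ∀ x ∈ w, x = Letter.b := by
      intro x hx
      have hx' : x ∈ s' ++ w ++ t := by simp [hx]
      rw [h2] at hx'
      exact List.eq_of_mem_replicate hx'
    exact List.eq_replicate_iff.mpr ⟨hw, hmem⟩

lemma infix_one (h n : ℕ) (hn : h - 1 ≤ n) :
    Letter.a :: List.replicate (h - 1) Letter.b <:+: Letter.a :: List.replicate n Letter.b := by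
  refine ⟨[], List.replicate (n - (h - 1)) Letter.b, ?_⟩
  simp only [List.nil_append, List.cons_append, List.cons.injEq, true_and]
  rw [← List.replicate_add]
  congr 1
  omega

lemma infix_two (h n : ℕ) (hn : h ≤ n) :
    List.replicate h Letter.b <:+: Letter.a :: List.replicate n Letter.b := by
  refine ⟨[Letter.a] ++ List.replicate (n - h) Letter.b, [], ?_⟩
  simp only [List.append_nil, List.append_assoc, List.singleton_append, List.cons_append,
    List.cons.injEq, true_and]
  rw [← List.replicate_add]
  have e : n - h + h = n := by omega
  rw [e, List.nil_append]

lemma Lh_length {h : ℕ} {w : List Letter} (hw : w ∈ Lh h) :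
    ∃ j, 1 ≤ j ∧ w.length = j * (h + 1) := by
  obtain ⟨j, hj, rfl⟩ := hw
  refine ⟨j, hj, ?_⟩
  simp [List.length_flatten, List.map_replicate, mul_comm]

end Aux

/-- For `h > 1`, `L_h = (a b^h)⁺` is not `h`-strictly locally
testable: no sets `I, T ⊆ {a,b}^{h-1}`, `F ⊆ {a,b}^h` define `L_h`, since
`a b^h ∈ L_h` and `a b^{h+1} ∉ L_h` have the same prefix of length `h-1`, the
same suffix of length `h-1`, and the same set of factors of length `h`. -/
theorem Lh_not_h_slt (h : ℕ) (hh : 1 < h) :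
    ¬ IsSLT h (Lh h) ∧
    (Letter.a :: List.replicate h Letter.b) ∈ Lh h ∧
    (Letter.a :: List.replicate (h + 1) Letter.b) ∉ Lh h ∧
    (Letter.a :: List.replicate h Letter.b).take (h - 1) =
      (Letter.a :: List.replicate (h + 1) Letter.b).take (h - 1) ∧
    (Letter.a :: List.replicate h Letter.b).drop
        ((Letter.a :: List.replicate h Letter.b).length - (h - 1)) =
      (Letter.a :: List.replicate (h + 1) Letter.b).drop
        ((Letter.a :: List.replicate (h + 1) Letter.b).length - (h - 1)) ∧
    (∀ w : List Letter, w.length = h →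
      (w <:+: (Letter.a :: List.replicate h Letter.b) ↔
        w <:+: (Letter.a :: List.replicate (h + 1) Letter.b))) := by
  have hmem : (Letter.a :: List.replicate h Letter.b) ∈ Lh h := ⟨1, le_refl 1, by simp⟩
  have hnmem : (Letter.a :: List.replicate (h + 1) Letter.b) ∉ Lh h := by
    intro hc
    obtain ⟨j, hj, hl⟩ := Lh_length hc
    simp only [List.length_cons, List.length_replicate] at hl
    rcases Nat.lt_or_ge j 2 with hj2 | hj2
    · interval_cases j; omega
    · nlinarith
  have htake : (Letter.a :: List.replicate h Letter.b).take (h - 1) =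
      (Letter.a :: List.replicate (h + 1) Letter.b).take (h - 1) := by
    obtain ⟨m, rfl⟩ : ∃ m, h = m + 2 := ⟨h - 2, by omega⟩
    have e : m + 2 - 1 = m + 1 := by omega
    rw [e, List.take_succ_cons, List.take_succ_cons, List.take_replicate, List.take_replicate]
    congr 2
    omega
  have hdrop : (Letter.a :: List.replicate h Letter.b).drop
        ((Letter.a :: List.replicate h Letter.b).length - (h - 1)) =
      (Letter.a :: List.replicate (h + 1) Letter.b).drop
        ((Letter.a :: List.replicate (h + 1) Letter.b).length - (h - 1)) := by
    obtain ⟨m, rfl⟩ : ∃ m, h = m + 2 := ⟨h - 2, by omega⟩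
    simp only [List.length_cons, List.length_replicate]
    have e1 : m + 2 + 1 - (m + 2 - 1) = 2 := by omega
    have e2 : m + 2 + 1 + 1 - (m + 2 - 1) = 3 := by omega
    rw [e1, e2]
    show (List.replicate (m + 2) Letter.b).drop 1 = (List.replicate (m + 3) Letter.b).drop 2
    rw [List.drop_replicate, List.drop_replicate]
    congr 1
  have hfac : ∀ w : List Letter, w.length = h →
      (w <:+: (Letter.a :: List.replicate h Letter.b) ↔
        w <:+: (Letter.a :: List.replicate (h + 1) Letter.b)) := by
    intro w hw
    constructor
    · intro hi
      rcases infix_classify h h (by omega) le_rfl w hw hi with rfl | rfl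
      · exact infix_one h (h + 1) (by omega)
      · exact infix_two h (h + 1) (by omega)
    · intro hi
      rcases infix_classify h (h + 1) (by omega) (by omega) w hw hi with rfl | rfl
      · exact infix_one h h (by omega)
      · exact infix_two h h le_rfl
  refine ⟨?_, hmem, hnmem, htake, hdrop, hfac⟩
  rintro ⟨I, T, F, hI, hT, hF, hL⟩
  have hu := (hL (Letter.a :: List.replicate h Letter.b) (by simp only [List.length_cons, List.length_replicate]; omega)).mp hmem
  obtain ⟨h1, h2, h3⟩ := hu
  apply hnmem
  apply (hL (Letter.a :: List.replicate (h + 1) Letter.b) (by simp only [List.length_cons, List.length_replicate]; omega)).mpr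
  refine ⟨htake ▸ h1, hdrop ▸ h2, ?_⟩
  intro y hy hyi
  exact h3 y hy ((hfac y hy).mpr hyi)
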